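/- Fix Δ ≥ 1 and order the finite subsets of Fin Δ by reverse inclusion (A ≤ B iff B ⊆ A), so that A ⊔ B = A ∩ B and A ⊓ B = A ∪ B. For a nonempty subset C of Fin Δ, let n(C) be the multiset consisting of Δ − |C| + 1 copies of C and |C| − 1 copies of the empty set. Then for all nonempty subsets C₁, C₂ of Fin Δ, every combination of n(C₁) and n(C₂) (taking intersection at one matched position and union at all other matched positions, for any permutation and index) is dominated by n(C) for some nonempty subset C of Fin Δ, i.e., is related to n(C) by Multiset.Rel (· ≤ ·) in the reverse-inclusion order. (Node-constraint closure in the fixed-point proof for Δ-coloring: applying the combination step to the node constraint of the Δ-coloring fixed point Π_Δ produces no new configurations.) -/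
import Mathlib

namespace RoundElim

/-- The configuration (multiset of cardinality `k`) associated to a function `Fin k → α`. -/
def ofFn {α : Type*} {k : ℕ} (f : Fin k → α) : Multiset α :=
  (List.ofFn f : List α)

/-- The node configuration `n(C)` of the fixed point `Π_Δ` of `Δ`-coloring:
`Δ - |C| + 1` copies of `C` and `|C| - 1` copies of the empty set. -/
def nConf (Δ : ℕ) (C : Finset (Fin Δ)) : Multiset (Finset (Fin Δ)) :=
  Multiset.replicate (Δ - C.card + 1) C + Multiset.replicate (C.card - 1) ∅

/-- The combination of `a` and `b` w.r.t. `φ` and `u` in the reverse-inclusion lattice on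
`Finset (Fin Δ)`: here `⊔ = ∩` (at the distinguished position `u`) and `⊓ = ∪` (elsewhere). -/
def combineRev {Δ : ℕ} (a b : Fin Δ → Finset (Fin Δ))
    (φ : Equiv.Perm (Fin Δ)) (u : Fin Δ) : Fin Δ → Finset (Fin Δ) :=
  fun i => if i = u then a i ∩ b (φ i) else a i ∪ b (φ i)

lemma ofFn_eq {α : Type*} {k : ℕ} (f : Fin k → α) :
    ofFn f = Multiset.map f Finset.univ.val := (Fin.univ_val_map f).symm

lemma count_ofFn {α : Type*} [DecidableEq α] {k : ℕ} (f : Fin k → α) (x : α) :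
    Multiset.count x (ofFn f) = (Finset.univ.filter fun i => f i = x).card := by
  rw [ofFn_eq, Multiset.count_map]
  simp only [Finset.card, Finset.filter_val]
  congr 1
  exact Multiset.filter_congr (fun i _ => eq_comm)

/-- If `C` is nonempty and there is a set `G` of exactly `Δ - |C| + 1` positions at which
`f` contains `C`, then `ofFn f` is dominated by `nConf Δ C`. -/
lemma dominate {Δ : ℕ} (C : Finset (Fin Δ)) (hC : C.Nonempty) (f : Fin Δ → Finset (Fin Δ))
    (G : Finset (Fin Δ)) (hG : G.card = Δ - C.card + 1) (hsub : ∀ i ∈ G, C ⊆ f i) :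
    Multiset.Rel (fun A B : Finset (Fin Δ) => B ⊆ A) (ofFn f) (nConf Δ C) := by
  have hk1 : 1 ≤ C.card := hC.card_pos
  have hkΔ : C.card ≤ Δ := by simpa using Finset.card_le_univ C
  have hval : (Finset.univ : Finset (Fin Δ)).val = G.val + Gᶜ.val :=
    calc (Finset.univ : Finset (Fin Δ)).val
        = (G.disjUnion Gᶜ disjoint_compl_right).val := by
          rw [Finset.disjUnion_eq_union, Finset.union_compl]
      _ = G.val + Gᶜ.val := rfl
  rw [ofFn_eq, hval, Multiset.map_add, nConf]
  refine Multiset.Rel.add ?_ ?_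
  · rw [Multiset.rel_replicate_right]
    constructor
    · rw [Multiset.card_map]; simpa using hG
    · intro x hx
      obtain ⟨i, hi, rfl⟩ := Multiset.mem_map.1 hx
      exact hsub i hi
  · rw [Multiset.rel_replicate_right]
    constructor
    · rw [Multiset.card_map]
      show Gᶜ.card = C.card - 1
      have h2 : Gᶜ.card = Δ - G.card := by
        rw [Finset.card_compl, Fintype.card_fin]
      omega
    · intro x _; exact Finset.empty_subset x

/-- Node-constraint closure in the fixed-point proof for `Δ`-coloring: every combination of
two node configurations `n(C₁)`, `n(C₂)` of `Π_Δ` is dominated (in the reverse-inclusion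
order, i.e. via `Multiset.Rel (fun A B => B ⊆ A)`) by `n(C)` for some nonempty `C`. -/
theorem deltaColoring_node_closure (Δ : ℕ) (hΔ : 1 ≤ Δ) :
    ∀ C₁ C₂ : Finset (Fin Δ), C₁.Nonempty → C₂.Nonempty →
    ∀ a b : Fin Δ → Finset (Fin Δ), ofFn a = nConf Δ C₁ → ofFn b = nConf Δ C₂ →
    ∀ (φ : Equiv.Perm (Fin Δ)) (u : Fin Δ),
    ∃ C : Finset (Fin Δ), C.Nonempty ∧
      Multiset.Rel (fun A B : Finset (Fin Δ) => B ⊆ A)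
        (ofFn (combineRev a b φ u)) (nConf Δ C) := by
  intro C₁ C₂ hC₁ hC₂ a b ha hb φ u
  set k₁ := C₁.card with hk₁def
  set k₂ := C₂.card with hk₂def
  have hC₁ne : C₁ ≠ ∅ := hC₁.ne_empty
  have hC₂ne : C₂ ≠ ∅ := hC₂.ne_empty
  have hk₁1 : 1 ≤ k₁ := hC₁.card_pos
  have hk₂1 : 1 ≤ k₂ := hC₂.card_pos
  have hk₁Δ : k₁ ≤ Δ := by simpa using Finset.card_le_univ C₁
  have hk₂Δ : k₂ ≤ Δ := by simpa using Finset.card_le_univ C₂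
  -- dichotomy for a and b
  have hamem : ∀ i, a i = C₁ ∨ a i = ∅ := by
    intro i
    have : a i ∈ ofFn a := by
      rw [ofFn_eq]; exact Multiset.mem_map_of_mem a (by simp)
    rw [ha, nConf, Multiset.mem_add] at this
    rcases this with h | h
    · exact Or.inl (Multiset.eq_of_mem_replicate h)
    · exact Or.inr (Multiset.eq_of_mem_replicate h)
  have hbmem : ∀ j, b j = C₂ ∨ b j = ∅ := by
    intro j
    have : b j ∈ ofFn b := by
      rw [ofFn_eq]; exact Multiset.mem_map_of_mem b (by simp)
    rw [hb, nConf, Multiset.mem_add] at this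
    rcases this with h | h
    · exact Or.inl (Multiset.eq_of_mem_replicate h)
    · exact Or.inr (Multiset.eq_of_mem_replicate h)
  -- counts
  have hacount : ∀ x, (Finset.univ.filter fun i => a i = x).card
      = Multiset.count x (nConf Δ C₁) := by
    intro x; rw [← count_ofFn, ha]
  have hbcount : ∀ x, (Finset.univ.filter fun j => b j = x).card
      = Multiset.count x (nConf Δ C₂) := by
    intro x; rw [← count_ofFn, hb]
  have hA1 : (Finset.univ.filter fun i => a i = C₁).card = Δ - k₁ + 1 := by
    rw [hacount C₁, nConf, Multiset.count_add, Multiset.count_replicate_self,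
      Multiset.count_replicate]
    simp [Ne.symm hC₁ne, ← hk₁def]
  have hA0 : (Finset.univ.filter fun i => a i = ∅).card = k₁ - 1 := by
    rw [hacount ∅, nConf, Multiset.count_add, Multiset.count_replicate_self,
      Multiset.count_replicate]
    simp [hC₁ne, ← hk₁def]
  -- transport b-counts along φ
  have hperm : ∀ x, (Finset.univ.filter fun i => b (φ i) = x)
      = Finset.map φ.symm.toEmbedding (Finset.univ.filter fun j => b j = x) := by
    intro x
    ext i
    simp only [Finset.mem_filter, Finset.mem_univ, true_and, Finset.mem_map,
      Equiv.coe_toEmbedding]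
    constructor
    · intro h; exact ⟨φ i, h, φ.symm_apply_apply i⟩
    · rintro ⟨j, hj, rfl⟩; simpa using hj
  have hB1 : (Finset.univ.filter fun i => b (φ i) = C₂).card = Δ - k₂ + 1 := by
    rw [hperm, Finset.card_map, hbcount C₂, nConf, Multiset.count_add,
      Multiset.count_replicate_self, Multiset.count_replicate]
    simp [Ne.symm hC₂ne, ← hk₂def]
  have hB0 : (Finset.univ.filter fun i => b (φ i) = ∅).card = k₂ - 1 := by
    rw [hperm, Finset.card_map, hbcount ∅, nConf, Multiset.count_add,
      Multiset.count_replicate_self, Multiset.count_replicate]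
    simp [hC₂ne, ← hk₂def]
  set A0 := Finset.univ.filter fun i => a i = ∅ with hA0def
  set B0 := Finset.univ.filter fun i => b (φ i) = ∅ with hB0def
  -- case analysis
  by_cases hau : a u = ∅
  · -- C = C₁
    refine ⟨C₁, hC₁, dominate C₁ hC₁ _ (Finset.univ.filter fun i => a i = C₁) hA1 ?_⟩
    intro i hi
    rw [Finset.mem_filter] at hi
    have hiu : i ≠ u := by
      intro h; rw [h, hau] at hi; exact hC₁ne hi.2.symm
    simp only [combineRev, if_neg hiu, hi.2]
    exact Finset.subset_union_left
  by_cases hbu : b (φ u) = ∅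
  · -- C = C₂
    refine ⟨C₂, hC₂, dominate C₂ hC₂ _ (Finset.univ.filter fun i => b (φ i) = C₂) hB1 ?_⟩
    intro i hi
    rw [Finset.mem_filter] at hi
    have hiu : i ≠ u := by
      intro h; rw [h, hbu] at hi; exact hC₂ne hi.2.symm
    simp only [combineRev, if_neg hiu, hi.2]
    exact Finset.subset_union_right
  -- now a u = C₁ and b (φ u) = C₂
  have hau' : a u = C₁ := (hamem u).resolve_right hau
  have hbu' : b (φ u) = C₂ := (hbmem (φ u)).resolve_right hbu
  set s := (A0 ∩ B0).card with hsdef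
  set m := (C₁ ∩ C₂).card with hmdef
  by_cases hms : m ≤ s
  · -- C = C₁ ∪ C₂
    have hCne : (C₁ ∪ C₂).Nonempty := hC₁.mono Finset.subset_union_left
    have hCcard : (C₁ ∪ C₂).card + m = k₁ + k₂ := Finset.card_union_add_card_inter C₁ C₂
    have hCΔ : (C₁ ∪ C₂).card ≤ Δ := by simpa using Finset.card_le_univ (C₁ ∪ C₂)
    set G₀ := ((A0 ∪ B0)ᶜ).erase u with hG₀def
    have hucompl : u ∈ (A0 ∪ B0)ᶜ := by
      simp only [Finset.mem_compl, Finset.mem_union, hA0def, hB0def, Finset.mem_filter,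
        Finset.mem_univ, true_and]
      tauto
    have hUcard : (A0 ∪ B0).card + s = (k₁ - 1) + (k₂ - 1) := by
      rw [hsdef, Finset.card_union_add_card_inter, hA0, hB0]
    have hcomplcard : ((A0 ∪ B0)ᶜ).card = Δ - (A0 ∪ B0).card := by
      simpa using Finset.card_compl (A0 ∪ B0)
    have hUle : (A0 ∪ B0).card ≤ Δ := by simpa using Finset.card_le_univ (A0 ∪ B0)
    have hG₀card : G₀.card = ((A0 ∪ B0)ᶜ).card - 1 := Finset.card_erase_of_mem hucompl
    have hG₀pos : 1 ≤ ((A0 ∪ B0)ᶜ).card := Finset.card_pos.2 ⟨u, hucompl⟩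
    have hle : Δ - (C₁ ∪ C₂).card + 1 ≤ G₀.card := by omega
    obtain ⟨G, hGsub, hGcard⟩ := Finset.exists_subset_card_eq hle
    refine ⟨C₁ ∪ C₂, hCne, dominate _ hCne _ G hGcard ?_⟩
    intro i hi
    have hi' := hGsub hi
    rw [hG₀def, Finset.mem_erase, Finset.mem_compl, Finset.mem_union] at hi'
    obtain ⟨hiu, hin⟩ := hi'
    have hai : a i = C₁ := by
      rcases hamem i with h | h
      · exact h
      · exact absurd (by simp [hA0def, h]) (fun hx => hin (Or.inl hx))
    have hbi : b (φ i) = C₂ := by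
      rcases hbmem (φ i) with h | h
      · exact h
      · exact absurd (by simp [hB0def, h]) (fun hx => hin (Or.inr hx))
    simp only [combineRev, if_neg hiu, hai, hbi]
    exact subset_rfl
  · -- C = C₁ ∩ C₂
    push_neg at hms
    have hCne : (C₁ ∩ C₂).Nonempty := Finset.card_pos.1 (by omega)
    set G₀ := (A0 ∩ B0)ᶜ with hG₀def
    have hcomplcard : ((A0 ∩ B0)ᶜ).card = Δ - s := by
      rw [hsdef]; simpa using Finset.card_compl (A0 ∩ B0)
    have hsle : s ≤ Δ := by
      have := Finset.card_le_univ (A0 ∩ B0); simpa [← hsdef] using this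
    have hmΔ : m ≤ Δ := by
      have := Finset.card_le_univ (C₁ ∩ C₂); simpa [← hmdef] using this
    have hle : Δ - (C₁ ∩ C₂).card + 1 ≤ G₀.card := by
      rw [hG₀def, hcomplcard, ← hmdef]; omega
    obtain ⟨G, hGsub, hGcard⟩ := Finset.exists_subset_card_eq hle
    refine ⟨C₁ ∩ C₂, hCne, dominate _ hCne _ G hGcard ?_⟩
    intro i hi
    have hi' := hGsub hi
    rw [hG₀def, Finset.mem_compl, Finset.mem_inter] at hi'
    by_cases hiu : i = u
    · subst hiu
      simp only [combineRev, if_pos rfl, hau', hbu']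
      exact subset_rfl
    · simp only [combineRev, if_neg hiu]
      rcases hamem i with h | h
      · exact (Finset.inter_subset_left).trans (h ▸ Finset.subset_union_left)
      · have hbC : b (φ i) = C₂ := by
          rcases hbmem (φ i) with h' | h'
          · exact h'
          · exact absurd ⟨by simp [hA0def, h], by simp [hB0def, h']⟩ hi'
        exact (Finset.inter_subset_right).trans (hbC ▸ Finset.subset_union_right)

end RoundElim
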